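/- Let H = (V, E) be a hypergraph that is hereditarily k-colorable (every induced sub-hypergraph admits a proper k-coloring), and set λ = k/(k−1). If L = {L_v} is a family of lists of positive integers with Σ_{v∈V} λ^{−|L_v|} < 1, then H admits a unique-maximum coloring from L. -/

import Mathlib

/-- Auxiliary induction (on the total size of the lists) for the potential method. -/
theorem um_aux {V : Type} [Fintype V] [DecidableEq V]
    (E : Finset (Finset V)) (k : ℕ) (hk : 2 ≤ k)
    (hered : ∀ V' : Finset V, ∃ c : V → Fin k, ∀ S ∈ E,
        2 ≤ (S ∩ V').card → ∃ u ∈ S ∩ V', ∃ w ∈ S ∩ V', c u ≠ c w) :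
    ∀ n : ℕ, ∀ (R : Finset V) (L : V → Finset ℕ),
      (∑ v ∈ R, (L v).card) ≤ n →
      (∑ v ∈ R, ((k : ℝ) / ((k : ℝ) - 1)) ^ (-((L v).card : ℤ)) < 1) →
      ∃ C : V → ℕ, (∀ v ∈ R, C v ∈ L v) ∧
        ∀ S ∈ E, (S ∩ R).Nonempty → ∃ v ∈ S ∩ R, ∀ u ∈ S ∩ R, u ≠ v → C u < C v := by
  have hK : (2:ℝ) ≤ (k:ℝ) := by exact_mod_cast hk
  have hK1 : (0:ℝ) < (k:ℝ) - 1 := by linarith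
  have hr0 : (0:ℝ) < (k : ℝ) / ((k : ℝ) - 1) := by positivity
  intro n
  induction n with
  | zero =>
    intro R L hmeas hpot
    rcases R.eq_empty_or_nonempty with hR | ⟨v0, hv0⟩
    · subst hR
      exact ⟨fun _ => 0, by simp, fun S _ h => absurd h (by simp)⟩
    · exfalso
      have hc0 : (L v0).card = 0 := by
        have h := Finset.single_le_sum (f := fun v => (L v).card)
          (fun i _ => Nat.zero_le _) hv0
        have h : (L v0).card ≤ ∑ v ∈ R, (L v).card := h
        omega
      have h1 : (1:ℝ) ≤ ∑ v ∈ R, ((k : ℝ) / ((k : ℝ) - 1)) ^ (-((L v).card : ℤ)) := by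
        have := Finset.single_le_sum
          (f := fun v => ((k : ℝ) / ((k : ℝ) - 1)) ^ (-((L v).card : ℤ)))
          (fun i _ => le_of_lt (zpow_pos hr0 _)) hv0
        simpa [hc0] using this
      linarith
  | succ n ih =>
    intro R L hmeas hpot
    rcases R.eq_empty_or_nonempty with hR | hR
    · subst hR
      exact ⟨fun _ => 0, by simp, fun S _ h => absurd h (by simp)⟩
    -- every list of a vertex in R is nonempty
    have hLcard : ∀ v ∈ R, 0 < (L v).card := by
      intro v hv
      by_contra h
      have hc0 : (L v).card = 0 := by omega
      have h1 : (1:ℝ) ≤ ∑ v ∈ R, ((k : ℝ) / ((k : ℝ) - 1)) ^ (-((L v).card : ℤ)) := by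
        have := Finset.single_le_sum
          (f := fun v => ((k : ℝ) / ((k : ℝ) - 1)) ^ (-((L v).card : ℤ)))
          (fun i _ => le_of_lt (zpow_pos hr0 _)) hv
        simpa [hc0] using this
      linarith
    -- the minimum color m
    obtain ⟨v0, hv0⟩ := hR
    obtain ⟨x0, hx0⟩ := Finset.card_pos.mp (hLcard v0 hv0)
    have hT : (R.biUnion L).Nonempty := ⟨x0, Finset.mem_biUnion.mpr ⟨v0, hv0, hx0⟩⟩
    set m : ℕ := (R.biUnion L).min' hT with hm
    obtain ⟨vm, hvmR, hvmL⟩ := Finset.mem_biUnion.mp ((R.biUnion L).min'_mem hT)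
    have hmin : ∀ v ∈ R, ∀ x ∈ L v, m ≤ x := fun v hv x hx =>
      (R.biUnion L).min'_le x (Finset.mem_biUnion.mpr ⟨v, hv, hx⟩)
    -- the set U of vertices whose list contains m, and a proper coloring of H[U]
    set U : Finset V := R.filter (fun v => m ∈ L v) with hU
    have hUR : U ⊆ R := Finset.filter_subset _ _
    have hUne : U.Nonempty := ⟨vm, Finset.mem_filter.mpr ⟨hvmR, hvmL⟩⟩
    obtain ⟨c, hc⟩ := hered U
    -- the heaviest color class A
    set w : V → ℝ := fun v => ((k : ℝ) / ((k : ℝ) - 1)) ^ (-((L v).card : ℤ)) with hw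
    have hwpos : ∀ v, 0 < w v := fun v => zpow_pos hr0 _
    set wc : Fin k → ℝ := fun i => ∑ v ∈ U.filter (fun v => c v = i), w v with hwc
    obtain ⟨i0, -, hi0⟩ := Finset.exists_max_image (Finset.univ) wc
      ⟨⟨0, by omega⟩, Finset.mem_univ _⟩
    set A : Finset V := U.filter (fun v => c v = i0) with hA
    have hAU : A ⊆ U := Finset.filter_subset _ _
    have hAR : A ⊆ R := hAU.trans hUR
    have hWsplit : ∑ i : Fin k, wc i = ∑ v ∈ U, w v := Finset.sum_fiberwise U c w
    have hWpos : 0 < ∑ v ∈ U, w v := Finset.sum_pos (fun v _ => hwpos v) hUne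
    have hWle : ∑ v ∈ U, w v ≤ (k:ℝ) * wc i0 := by
      calc ∑ v ∈ U, w v = ∑ i : Fin k, wc i := hWsplit.symm
        _ ≤ ∑ _i : Fin k, wc i0 := Finset.sum_le_sum (fun i _ => hi0 i (Finset.mem_univ i))
        _ = (k:ℝ) * wc i0 := by simp [mul_comm]
    have hApos : 0 < wc i0 := by nlinarith
    have hAne : A.Nonempty :=
      Finset.nonempty_of_sum_ne_zero (f := w) (ne_of_gt hApos)
    -- the new lists and remaining vertex set
    set L' : V → Finset ℕ := fun v => (L v).erase m with hL'
    set R' : Finset V := R \ A with hR'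
    -- measure decreases
    have hmeas' : ∑ v ∈ R', (L' v).card ≤ n := by
      have h1 : ∑ v ∈ R', (L' v).card ≤ ∑ v ∈ R', (L v).card :=
        Finset.sum_le_sum fun v _ => Finset.card_erase_le
      have h2 : ∑ v ∈ R', (L v).card + ∑ v ∈ A, (L v).card = ∑ v ∈ R, (L v).card :=
        Finset.sum_sdiff hAR
      obtain ⟨a, ha⟩ := hAne
      have hma : m ∈ L a := (Finset.mem_filter.mp (hAU ha)).2
      have h3 : 1 ≤ ∑ v ∈ A, (L v).card := by
        have := Finset.single_le_sum (f := fun v => (L v).card) (fun i _ => Nat.zero_le _) ha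
        have : 1 ≤ (L a).card := Finset.card_pos.mpr ⟨m, hma⟩
        calc 1 ≤ (L a).card := this
          _ ≤ _ := Finset.single_le_sum (f := fun v => (L v).card) (fun i _ => Nat.zero_le _) ha
      omega
    -- potential still below 1
    have hsplitR : R \ A = (U \ A) ∪ (R \ U) := by
      ext v
      simp only [Finset.mem_sdiff, Finset.mem_union, hU, hA, Finset.mem_filter]
      tauto
    have hdisj : Disjoint (U \ A) (R \ U) := by
      rw [Finset.disjoint_left]
      intro a ha hb
      exact (Finset.mem_sdiff.mp hb).2 (Finset.mem_sdiff.mp ha).1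
    have hterm1 : ∀ v ∈ U \ A,
        ((k : ℝ) / ((k : ℝ) - 1)) ^ (-((L' v).card : ℤ)) = ((k : ℝ) / ((k : ℝ) - 1)) * w v := by
      intro v hv
      have hmv : m ∈ L v := (Finset.mem_filter.mp (Finset.mem_sdiff.mp hv).1).2
      have h1 : 1 ≤ (L v).card := Finset.card_pos.mpr ⟨m, hmv⟩
      have hcard : (L' v).card = (L v).card - 1 := Finset.card_erase_of_mem hmv
      rw [hcard]
      have hz : (-(((L v).card - 1 : ℕ) : ℤ)) = (-((L v).card : ℤ)) + 1 := by
        push_cast [h1]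
        ring
      rw [hz, zpow_add₀ (ne_of_gt hr0), zpow_one, hw]
      ring
    have hterm2 : ∀ v ∈ R \ U,
        ((k : ℝ) / ((k : ℝ) - 1)) ^ (-((L' v).card : ℤ)) = w v := by
      intro v hv
      have hmv : m ∉ L v := by
        intro hmL
        exact (Finset.mem_sdiff.mp hv).2
          (Finset.mem_filter.mpr ⟨(Finset.mem_sdiff.mp hv).1, hmL⟩)
      rw [hL']
      simp only [Finset.erase_eq_of_notMem hmv]
      rfl
    have hpot' : ∑ v ∈ R', ((k : ℝ) / ((k : ℝ) - 1)) ^ (-((L' v).card : ℤ)) < 1 := by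
      have hrw : ∑ v ∈ R', ((k : ℝ) / ((k : ℝ) - 1)) ^ (-((L' v).card : ℤ))
          = ((k : ℝ) / ((k : ℝ) - 1)) * (∑ v ∈ U \ A, w v) + ∑ v ∈ R \ U, w v := by
        rw [hR', hsplitR, Finset.sum_union hdisj, Finset.sum_congr rfl hterm1,
          Finset.sum_congr rfl hterm2, ← Finset.mul_sum]
      have hUA : ∑ v ∈ U \ A, w v + ∑ v ∈ A, w v = ∑ v ∈ U, w v := Finset.sum_sdiff hAU
      have hRU : ∑ v ∈ R \ U, w v + ∑ v ∈ U, w v = ∑ v ∈ R, w v := Finset.sum_sdiff hUR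
      have hAval : ∑ v ∈ A, w v = wc i0 := rfl
      have hkey : ((k : ℝ) / ((k : ℝ) - 1)) * (∑ v ∈ U \ A, w v)
          ≤ ∑ v ∈ U \ A, w v + wc i0 := by
        rw [div_mul_eq_mul_div, div_le_iff₀ hK1]
        nlinarith [hWle, hUA, hApos]
      have hpotR : ∑ v ∈ R, w v < 1 := hpot
      rw [hrw]
      linarith
    -- recursive coloring
    obtain ⟨C', hC'mem, hC'um⟩ := ih R' L' hmeas' hpot'
    have hCgt : ∀ v ∈ R', m < C' v := by
      intro v hv
      have hvR : v ∈ R := (Finset.mem_sdiff.mp hv).1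
      have hx : C' v ∈ (L v).erase m := hC'mem v hv
      have hne : C' v ≠ m := Finset.ne_of_mem_erase hx
      have hle : m ≤ C' v := hmin v hvR (C' v) (Finset.mem_of_mem_erase hx)
      omega
    refine ⟨fun v => if v ∈ A then m else C' v, ?_, ?_⟩
    · intro v hv
      by_cases hvA : v ∈ A
      · simp only [hvA, if_pos]
        exact (Finset.mem_filter.mp (hAU hvA)).2
      · simp only [hvA, if_neg, if_false]
        exact Finset.mem_of_mem_erase (hC'mem v (Finset.mem_sdiff.mpr ⟨hv, hvA⟩))
    · intro S hS hSne
      by_cases hcase : (S ∩ R').Nonempty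
      · obtain ⟨v, hvSR', hvmax⟩ := hC'um S hS hcase
        obtain ⟨hvS, hvR'⟩ := Finset.mem_inter.mp hvSR'
        have hvnA : v ∉ A := (Finset.mem_sdiff.mp hvR').2
        have hvR : v ∈ R := (Finset.mem_sdiff.mp hvR').1
        refine ⟨v, Finset.mem_inter.mpr ⟨hvS, hvR⟩, ?_⟩
        intro u huSR hune
        obtain ⟨huS, huR⟩ := Finset.mem_inter.mp huSR
        by_cases huA : u ∈ A
        · simp only [huA, hvnA, if_pos, if_neg, if_false]
          exact hCgt v hvR'
        · simp only [huA, hvnA, if_neg, if_false]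
          exact hvmax u (Finset.mem_inter.mpr ⟨huS, Finset.mem_sdiff.mpr ⟨huR, huA⟩⟩) hune
      · -- S ∩ R is contained in A, so it is a single vertex
        have hsub : S ∩ R ⊆ A := by
          intro x hx
          by_contra hxA
          obtain ⟨hxS, hxR⟩ := Finset.mem_inter.mp hx
          exact hcase ⟨x, Finset.mem_inter.mpr ⟨hxS, Finset.mem_sdiff.mpr ⟨hxR, hxA⟩⟩⟩
        have hcard : ¬ (2 ≤ (S ∩ U).card) := by
          intro h2
          obtain ⟨u, hu, x, hx, hne⟩ := hc S hS h2
          have huA : u ∈ A := hsub (Finset.mem_inter.mpr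
            ⟨(Finset.mem_inter.mp hu).1, hUR (Finset.mem_inter.mp hu).2⟩)
          have hxA : x ∈ A := hsub (Finset.mem_inter.mpr
            ⟨(Finset.mem_inter.mp hx).1, hUR (Finset.mem_inter.mp hx).2⟩)
          have h1 : c u = i0 := (Finset.mem_filter.mp huA).2
          have h2' : c x = i0 := (Finset.mem_filter.mp hxA).2
          exact hne (h1.trans h2'.symm)
        have hsub2 : S ∩ R ⊆ S ∩ U := by
          intro x hx
          exact Finset.mem_inter.mpr ⟨(Finset.mem_inter.mp hx).1, hAU (hsub hx)⟩
        have hcard1 : (S ∩ R).card ≤ 1 := by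
          have := Finset.card_le_card hsub2
          omega
        obtain ⟨v, hv⟩ := hSne
        refine ⟨v, hv, ?_⟩
        intro u hu hune
        exact absurd (Finset.card_le_one.mp hcard1 u hu v hv) hune

/-- Potential-method theorem: if `H = (V, E)` is hereditarily `k`-colorable and
`∑_v λ^{-|L_v|} < 1` with `λ = k/(k-1)`, then `H` admits a unique-maximum coloring
from the lists `L` (of positive integers). -/
theorem um_coloring_from_lists_potential {V : Type} [Fintype V] [DecidableEq V]
    (E : Finset (Finset V)) (k : ℕ) (hk : 2 ≤ k)
    (hered : ∀ V' : Finset V, ∃ c : V → Fin k, ∀ S ∈ E,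
        2 ≤ (S ∩ V').card → ∃ u ∈ S ∩ V', ∃ w ∈ S ∩ V', c u ≠ c w)
    (L : V → Finset ℕ) (hpos : ∀ v : V, ∀ x ∈ L v, 0 < x)
    (hsum : ∑ v : V, ((k : ℝ) / ((k : ℝ) - 1)) ^ (-((L v).card : ℤ)) < 1) :
    ∃ C : V → ℕ, (∀ v, C v ∈ L v) ∧
      ∀ S ∈ E, S.Nonempty → ∃ v ∈ S, ∀ u ∈ S, u ≠ v → C u < C v := by
  obtain ⟨C, h1, h2⟩ := um_aux E k hk hered (∑ v ∈ Finset.univ, (L v).card)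
    Finset.univ L le_rfl hsum
  refine ⟨C, fun v => h1 v (Finset.mem_univ v), ?_⟩
  intro S hS hSne
  have := h2 S hS (by simpa [Finset.inter_univ] using hSne)
  simpa [Finset.inter_univ] using this
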